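/- A two-outcome measurement nearly preserving relative entropy: Let ρ and σ be quantum states on ℂ^n with supp(ρ) ⊆ supp(σ). Then there exists a POVM element F on ℂ^n such that, setting p := Tr(Fρ) and q := Tr(Fσ) and letting S₂ := p·logb 2 (p/q) + (1−p)·logb 2 ((1−p)/(1−q)) (terms with zero first factor contribute 0), one has S(ρ‖σ) ≥ S₂ and S₂ ≥ (S(ρ‖σ) − logb 2 n)/(n − 1) − 1. -/

import Mathlib

open Matrix BigOperators
open scoped ComplexOrder

noncomputable section

/-- A quantum state: positive semidefinite matrix with unit trace. -/
def IsState {d : Type*} [Fintype d] (ρ : Matrix d d ℂ) : Prop :=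
  ρ.PosSemidef ∧ ρ.trace = 1

/-- `SuppLE ρ σ` : the support of `ρ` is contained in the support of `σ`,
expressed as inclusion of kernels the other way. -/
def SuppLE {d : Type*} [Fintype d] (ρ σ : Matrix d d ℂ) : Prop :=
  ∀ v : d → ℂ, σ *ᵥ v = 0 → ρ *ᵥ v = 0

/-- Matrix logarithm: apply `Real.log` to the eigenvalues (with `log 0 = 0`). -/
noncomputable def matLog {d : Type*} [Fintype d] [DecidableEq d]
    (ρ : Matrix d d ℂ) : Matrix d d ℂ :=
  if h : ρ.IsHermitian then
    (h.eigenvectorUnitary : Matrix d d ℂ) *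
      Matrix.diagonal (fun i => (Real.log (h.eigenvalues i) : ℂ)) *
      (star (h.eigenvectorUnitary : Matrix d d ℂ))
  else 0

/-- Quantum relative entropy `S(ρ‖σ) = Re Tr (ρ (log ρ - log σ))`. -/
noncomputable def relEnt {d : Type*} [Fintype d] [DecidableEq d]
    (ρ σ : Matrix d d ℂ) : ℝ :=
  (Matrix.trace (ρ * (matLog ρ - matLog σ))).re

/-- Trace norm of a Hermitian matrix: sum of absolute values of eigenvalues. -/
noncomputable def traceNorm {d : Type*} [Fintype d] [DecidableEq d]
    (A : Matrix d d ℂ) : ℝ :=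
  if h : A.IsHermitian then ∑ i, |h.eigenvalues i| else 0

/-- Rank-one operator `|ψ⟩⟨ψ|`. -/
def ketbra {d : Type*} (ψ : d → ℂ) : Matrix d d ℂ :=
  Matrix.of fun a b => ψ a * (starRingEnd ℂ) (ψ b)

/-- A POVM element: a positive semidefinite matrix `F` with `1 - F` positive semidefinite. -/
def IsPOVMElem {d : Type*} [Fintype d] [DecidableEq d] (F : Matrix d d ℂ) : Prop :=
  F.PosSemidef ∧ ((1 : Matrix d d ℂ) - F).PosSemidef

/-- `trR F ρ = Re Tr (F ρ)`. -/
noncomputable def trR {d : Type*} [Fintype d] (F ρ : Matrix d d ℂ) : ℝ :=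
  (Matrix.trace (F * ρ)).re

/-- Observational divergence `D(ρ‖σ)`. -/
noncomputable def obsDiv {d : Type*} [Fintype d] [DecidableEq d]
    (ρ σ : Matrix d d ℂ) : ℝ :=
  sSup {x : ℝ | ∃ F : Matrix d d ℂ, IsPOVMElem F ∧ trR F σ ≠ 0 ∧
    x = trR F ρ * Real.logb 2 (trR F ρ / trR F σ)}

/-- A probability distribution on `Fin n`. -/
def IsProbDist {n : ℕ} (P : Fin n → ℝ) : Prop :=
  (∀ i, 0 ≤ P i) ∧ ∑ i, P i = 1

/-- Classical relative entropy (base 2); terms with `P i = 0` contribute `0`. -/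
noncomputable def cRelEnt {n : ℕ} (P Q : Fin n → ℝ) : ℝ :=
  ∑ i, P i * Real.logb 2 (P i / Q i)

/-- Classical observational divergence. -/
noncomputable def cObsDiv {n : ℕ} (P Q : Fin n → ℝ) : ℝ :=
  sSup {x : ℝ | ∃ f : Fin n → ℝ, (∀ i, 0 ≤ f i ∧ f i ≤ 1) ∧
    (∑ i, f i * Q i) ≠ 0 ∧
    x = (∑ i, f i * P i) * Real.logb 2 ((∑ i, f i * P i) / (∑ i, f i * Q i))}


/- ### auxiliary real lemmas -/

lemma aux_logSum2 (a b c d : ℝ) (ha : 0 ≤ a) (hb : 0 < b) (hc : 0 ≤ c) (hd : 0 < d) :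
    (a + c) * Real.log ((a+c)/(b+d)) ≤ a * Real.log (a/b) + c * Real.log (c/d) := by
  have hbd : 0 < b + d := by linarith
  have key := Real.convexOn_mul_log.2 (Set.mem_Ici.2 (div_nonneg ha hb.le))
    (Set.mem_Ici.2 (div_nonneg hc hd.le)) (div_nonneg hb.le hbd.le) (div_nonneg hd.le hbd.le)
    (by field_simp)
  simp only [smul_eq_mul] at key
  have harg : b / (b+d) * (a/b) + d/(b+d) * (c/d) = (a+c)/(b+d) := by field_simp
  rw [harg] at key
  have h2 := mul_le_mul_of_nonneg_left key hbd.le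
  have e1 : (b+d) * ((a+c)/(b+d) * Real.log ((a+c)/(b+d))) = (a+c) * Real.log ((a+c)/(b+d)) := by
    field_simp
  have e2 : (b+d) * (b/(b+d) * (a/b * Real.log (a/b)) + d/(b+d) * (c/d * Real.log (c/d)))
      = a * Real.log (a/b) + c * Real.log (c/d) := by
    field_simp
  rw [e1, e2] at h2
  exact h2

lemma aux_logSumFinset {ι : Type*} (T : Finset ι) (P Q : ι → ℝ)
    (hP : ∀ j ∈ T, 0 ≤ P j) (hQ : ∀ j ∈ T, 0 ≤ Q j)
    (h0 : ∀ j ∈ T, Q j = 0 → P j = 0) :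
    (∑ j ∈ T, P j) * Real.log ((∑ j ∈ T, P j)/(∑ j ∈ T, Q j))
      ≤ ∑ j ∈ T, P j * Real.log (P j / Q j) := by
  set SP := ∑ j ∈ T, P j with hSP
  set SQ := ∑ j ∈ T, Q j with hSQ
  rcases eq_or_lt_of_le (Finset.sum_nonneg hQ) with hq | hq
  · have hQ0 : ∀ j ∈ T, Q j = 0 := by
      intro j hj
      have h1 := Finset.single_le_sum hQ hj
      exact le_antisymm (by linarith [hq]) (hQ j hj)
    have hP0 : ∀ j ∈ T, P j = 0 := fun j hj => h0 j hj (hQ0 j hj)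
    have : SP = 0 := Finset.sum_eq_zero hP0
    rw [this]
    simp
    exact Finset.sum_nonneg fun j hj => by rw [hP0 j hj]; simp
  · have hq' : 0 < SQ := hq
    have key := Real.convexOn_mul_log.map_sum_le (t := T)
      (w := fun j => Q j / SQ) (p := fun j => P j / Q j)
      (fun j hj => div_nonneg (hQ j hj) hq'.le)
      (by rw [← Finset.sum_div]; field_simp; exact hSQ.symm)
      (fun j hj => Set.mem_Ici.2 (div_nonneg (hP j hj) (hQ j hj)))
    simp only [smul_eq_mul] at key
    have harg : ∑ j ∈ T, Q j / SQ * (P j / Q j) = SP / SQ := by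
      rw [hSP, Finset.sum_div]
      refine Finset.sum_congr rfl fun j hj => ?_
      rcases eq_or_lt_of_le (hQ j hj) with h | h
      · rw [← h, h0 j hj h.symm]; simp
      · field_simp
    rw [harg] at key
    have h2 := mul_le_mul_of_nonneg_left key hq'.le
    have e1 : SQ * (SP/SQ * Real.log (SP/SQ)) = SP * Real.log (SP/SQ) := by field_simp
    have e2 : SQ * ∑ j ∈ T, Q j / SQ * (P j / Q j * Real.log (P j / Q j))
        = ∑ j ∈ T, P j * Real.log (P j / Q j) := by
      rw [Finset.mul_sum]
      refine Finset.sum_congr rfl fun j hj => ?_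
      rcases eq_or_lt_of_le (hQ j hj) with h | h
      · rw [← h, h0 j hj h.symm]; simp
      · field_simp
    rw [e1, e2] at h2
    exact h2

lemma aux_lt2 : Real.log 2 < 1 := by have := Real.log_two_lt_d9; linarith
lemma aux_gt2 : (0:ℝ) < Real.log 2 := Real.log_pos (by norm_num)

lemma aux_term1_eq (p q : ℝ) (hq : 0 < q) :
    (Real.log 2 * p) * Real.logb 2 ((Real.log 2 * p)/(Real.log 2 * q)) = p * Real.log (p/q) := by
  rw [mul_div_mul_left _ _ (ne_of_gt aux_gt2), Real.logb]
  field_simp [ne_of_gt aux_gt2]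

lemma aux_scale_ineq (p q : ℝ) (hp0 : 0 ≤ p) (hp1 : p ≤ 1) (hq0 : 0 ≤ q) (hq1 : q ≤ 1)
    (h0 : q = 0 → p = 0) (h1 : q = 1 → p = 1) :
    (Real.log 2 * p) * Real.logb 2 ((Real.log 2 * p)/(Real.log 2 * q)) +
      (1 - Real.log 2 * p) * Real.logb 2 ((1 - Real.log 2 * p)/(1 - Real.log 2 * q))
    ≤ p * Real.log (p/q) + (1-p) * Real.log ((1-p)/(1-q)) := by
  have ht0 : (0:ℝ) < Real.log 2 := aux_gt2
  have ht1 : Real.log 2 < 1 := aux_lt2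
  set t := Real.log 2 with hT
  rcases eq_or_lt_of_le hq0 with hq | hq
  · have hp : p = 0 := h0 hq.symm
    rw [hp, ← hq]; norm_num
  rw [aux_term1_eq p q hq]
  have htq : 0 < 1 - t * q := by nlinarith
  have htp : 0 < 1 - t * p := by nlinarith
  have key : (1 - t*p) * Real.log ((1 - t*p)/(1 - t*q))
      ≤ t * ((1-p) * Real.log ((1-p)/(1-q))) := by
    rcases eq_or_lt_of_le hp1 with hp1' | hp1'
    · rw [hp1']
      have h1q : t * q ≤ t := by nlinarith
      have hle : Real.log ((1 - t*1)/(1 - t*q)) ≤ 0 := by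
        apply Real.log_nonpos
        · apply div_nonneg (by linarith) htq.le
        · rw [div_le_one htq]; nlinarith
      nlinarith [mul_nonpos_of_nonneg_of_nonpos (by linarith : (0:ℝ) ≤ 1 - t*1) hle]
    · have hq1' : q < 1 := by
        rcases eq_or_lt_of_le hq1 with h | h
        · exact absurd (h1 h) (by linarith)
        · exact h
      have H := aux_logSum2 (t*(1-p)) (t*(1-q)) (1-t) (1-t)
        (by nlinarith) (by nlinarith) (by linarith) (by linarith)
      have e1 : t*(1-p) + (1-t) = 1 - t*p := by ring
      have e2 : t*(1-q) + (1-t) = 1 - t*q := by ring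
      have e3 : t*(1-p) / (t*(1-q)) = (1-p)/(1-q) :=
        mul_div_mul_left _ _ (ne_of_gt ht0)
      have e4 : (1-t)/(1-t) = 1 := div_self (by linarith)
      rw [e1, e2, e3, e4, Real.log_one, mul_zero, add_zero] at H
      nlinarith [H]
  have expand : (1 - t * p) * Real.logb 2 ((1 - t * p)/(1 - t * q))
      = ((1 - t*p) * Real.log ((1 - t*p)/(1 - t*q))) / t := by
    rw [Real.logb, ← hT]; ring
  rw [expand]
  have : ((1 - t*p) * Real.log ((1 - t*p)/(1 - t*q))) / t ≤ (1-p) * Real.log ((1-p)/(1-q)) := by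
    rw [div_le_iff₀ ht0]
    nlinarith [key]
  linarith

lemma aux_lower_ineq (p q : ℝ) (hp0 : 0 ≤ p) (hp1 : p ≤ 1) (hq0 : 0 ≤ q) (hq1 : q ≤ 1)
    (h0 : q = 0 → p = 0) :
    -(p * Real.log q) - 1
    ≤ (Real.log 2 * p) * Real.logb 2 ((Real.log 2 * p)/(Real.log 2 * q)) +
      (1 - Real.log 2 * p) * Real.logb 2 ((1 - Real.log 2 * p)/(1 - Real.log 2 * q)) := by
  have ht0 : (0:ℝ) < Real.log 2 := aux_gt2
  have ht1 : Real.log 2 < 1 := aux_lt2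
  set t := Real.log 2 with hT
  rcases eq_or_lt_of_le hq0 with hq | hq
  · have hp : p = 0 := h0 hq.symm
    rw [hp, ← hq]; norm_num
  have htq : 0 < 1 - t * q := by nlinarith
  have htp : 0 < 1 - t * p := by nlinarith
  have hterm2 : -p ≤ (1 - t*p) * Real.logb 2 ((1 - t*p)/(1 - t*q)) := by
    have mono : Real.logb 2 (1 - t*p) ≤ Real.logb 2 ((1 - t*p)/(1 - t*q)) := by
      apply Real.logb_le_logb_of_le (by norm_num) htp
      rw [le_div_iff₀ htq]
      nlinarith [mul_nonneg htp.le (mul_nonneg ht0.le hq0)]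
    have hlog : -(t*p) ≤ (1 - t*p) * Real.log (1 - t*p) := by
      have hinv := Real.log_le_sub_one_of_pos (x := (1 - t*p)⁻¹) (by positivity)
      rw [Real.log_inv] at hinv
      have : -Real.log (1 - t*p) ≤ (1 - t*p)⁻¹ - 1 := hinv
      have h2 := mul_le_mul_of_nonneg_left this htp.le
      rw [mul_sub, mul_inv_cancel₀ (ne_of_gt htp)] at h2
      nlinarith
    have h3 : (1 - t*p) * Real.logb 2 (1 - t*p)
        ≤ (1 - t*p) * Real.logb 2 ((1 - t*p)/(1 - t*q)) :=
      mul_le_mul_of_nonneg_left mono htp.le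
    have h4 : -p ≤ (1 - t*p) * Real.logb 2 (1 - t*p) := by
      rw [Real.logb, ← hT, mul_div_assoc', le_div_iff₀ ht0]
      nlinarith [hlog]
    linarith
  rcases eq_or_lt_of_le hp0 with hp | hp
  · have h6 : Real.logb 2 (1 - t*q) ≤ 0 :=
      Real.logb_nonpos (by norm_num) htq.le (by nlinarith)
    rw [← hp]
    norm_num
    linarith [h6]
  rw [aux_term1_eq p q hq]
  have hlogp : p - 1 ≤ p * Real.log p := by
    have hinv := Real.log_le_sub_one_of_pos (x := p⁻¹) (by positivity)
    rw [Real.log_inv] at hinv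
    have h2 := mul_le_mul_of_nonneg_left hinv hp.le
    rw [mul_sub, mul_inv_cancel₀ (ne_of_gt hp)] at h2
    nlinarith
  have hdiv : p * Real.log (p/q) = p * Real.log p - p * Real.log q := by
    rw [Real.log_div (ne_of_gt hp) (ne_of_gt hq)]; ring
  rw [hdiv]
  linarith

/- ### auxiliary matrix lemmas -/

lemma aux_trace_mul_diag {d : Type*} [Fintype d] [DecidableEq d]
    (A : Matrix d d ℂ) (f : d → ℂ) :
    (A * Matrix.diagonal f).trace = ∑ j, A j j * f j := by
  simp [Matrix.trace, Matrix.diag, Matrix.mul_apply, Matrix.diagonal]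

lemma aux_trace_mul_matLog {d : Type*} [Fintype d] [DecidableEq d]
    (A B : Matrix d d ℂ) (hB : B.IsHermitian) :
    (A * matLog B).trace = ∑ j,
      ((star (hB.eigenvectorUnitary : Matrix d d ℂ) * A *
        (hB.eigenvectorUnitary : Matrix d d ℂ)) j j) * (Real.log (hB.eigenvalues j) : ℂ) := by
  rw [matLog, dif_pos hB]
  set U := (hB.eigenvectorUnitary : Matrix d d ℂ)
  set L := Matrix.diagonal (fun i => (Real.log (hB.eigenvalues i) : ℂ))
  have : A * (U * L * star U) = A * U * L * star U := by
    simp only [Matrix.mul_assoc]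
  rw [this, Matrix.trace_mul_cycle (A * U) L (star U), ← Matrix.mul_assoc,
    aux_trace_mul_diag]

lemma aux_entry_conj {d : Type*} [Fintype d] [DecidableEq d]
    (A U : Matrix d d ℂ) (j : d) :
    (star U * A * U) j j = star (fun i => U i j) ⬝ᵥ (A *ᵥ fun i => U i j) := by
  simp only [Matrix.mul_apply, Matrix.star_apply, Matrix.mulVec, dotProduct, Pi.star_apply,
    Finset.sum_mul, Finset.mul_sum]
  rw [Finset.sum_comm]
  refine Finset.sum_congr rfl fun i _ => Finset.sum_congr rfl fun k _ => by ring

set_option maxHeartbeats 1600000 in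
/-- A two-outcome measurement nearly preserving relative entropy. -/
theorem two_outcome_measurement_relEnt {n : ℕ} (ρ σ : Matrix (Fin n) (Fin n) ℂ)
    (hρ : IsState ρ) (hσ : IsState σ) (hsupp : SuppLE ρ σ) :
    ∃ F : Matrix (Fin n) (Fin n) ℂ, IsPOVMElem F ∧
      relEnt ρ σ ≥
        trR F ρ * Real.logb 2 (trR F ρ / trR F σ) +
          (1 - trR F ρ) * Real.logb 2 ((1 - trR F ρ) / (1 - trR F σ)) ∧
      trR F ρ * Real.logb 2 (trR F ρ / trR F σ) +
          (1 - trR F ρ) * Real.logb 2 ((1 - trR F ρ) / (1 - trR F σ))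
        ≥ (relEnt ρ σ - Real.logb 2 n) / ((n : ℝ) - 1) - 1 := by
  classical
  have hρH : ρ.IsHermitian := hρ.1.1
  have hσH : σ.IsHermitian := hσ.1.1
  have hn : 0 < n := by
    rcases Nat.eq_zero_or_pos n with h | h
    · exfalso
      have := hρ.2
      subst h
      simp [Matrix.trace] at this
    · exact h
  haveI : Nonempty (Fin n) := ⟨⟨0, hn⟩⟩
  set U : Matrix (Fin n) (Fin n) ℂ := (hσH.eigenvectorUnitary : Matrix (Fin n) (Fin n) ℂ)
    with hUdef
  set V : Matrix (Fin n) (Fin n) ℂ := (hρH.eigenvectorUnitary : Matrix (Fin n) (Fin n) ℂ)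
    with hVdef
  set w : Fin n → Fin n → ℂ := fun j => ⇑(hσH.eigenvectorBasis j) with hwdef
  have hwU : ∀ j, w j = fun i => U i j := by
    intro j; funext i
    rw [hUdef]; exact (Matrix.IsHermitian.eigenvectorUnitary_apply hσH i j).symm
  set Q : Fin n → ℝ := fun j => hσH.eigenvalues j with hQdef
  set r : Fin n → ℝ := fun i => hρH.eigenvalues i with hrdef
  set P : Fin n → ℝ := fun j => ((star (w j)) ⬝ᵥ (ρ *ᵥ w j)).re with hPdef
  set W : Matrix (Fin n) (Fin n) ℂ := star V * U with hWdef
  set M : Fin n → Fin n → ℝ := fun j i => Complex.normSq (W i j) with hMdef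
  -- basic eigenvalue facts
  have hQ0 : ∀ j, 0 ≤ Q j := fun j => hσ.1.eigenvalues_nonneg j
  have hr0 : ∀ i, 0 ≤ r i := fun i => hρ.1.eigenvalues_nonneg i
  have hUstar : star U * U = 1 := by
    rw [hUdef]; exact Unitary.coe_star_mul_self hσH.eigenvectorUnitary
  have hUstar' : U * star U = 1 := by
    rw [hUdef]; exact Unitary.coe_mul_star_self hσH.eigenvectorUnitary
  have hVstar : star V * V = 1 := by
    rw [hVdef]; exact Unitary.coe_star_mul_self hρH.eigenvectorUnitary
  have hVstar' : V * star V = 1 := by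
    rw [hVdef]; exact Unitary.coe_mul_star_self hρH.eigenvectorUnitary
  -- sums of eigenvalues
  have hQsumC : (Matrix.trace σ) = ∑ j, (Q j : ℂ) := by
    nth_rewrite 1 [hσH.spectral_theorem]
    rw [Unitary.conjStarAlgAut_apply]
    rw [Matrix.trace_mul_cycle, ← hUdef, hUstar, Matrix.one_mul, Matrix.trace_diagonal]
    rfl
  have hQsum : ∑ j, Q j = 1 := by
    have h := hσ.2
    rw [hQsumC] at h
    have : ((∑ j, Q j : ℝ) : ℂ) = 1 := by push_cast; exact h
    exact_mod_cast this
  have hrsumC : (Matrix.trace ρ) = ∑ i, (r i : ℂ) := by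
    nth_rewrite 1 [hρH.spectral_theorem]
    rw [Unitary.conjStarAlgAut_apply]
    rw [Matrix.trace_mul_cycle, ← hVdef, hVstar, Matrix.one_mul, Matrix.trace_diagonal]
    rfl
  have hrsum : ∑ i, r i = 1 := by
    have h := hρ.2
    rw [hrsumC] at h
    have : ((∑ i, r i : ℝ) : ℂ) = 1 := by push_cast; exact h
    exact_mod_cast this
  have hQ1 : ∀ j, Q j ≤ 1 := by
    intro j
    calc Q j ≤ ∑ j', Q j' := Finset.single_le_sum (fun j' _ => hQ0 j') (Finset.mem_univ j)
    _ = 1 := hQsum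
  have hr1 : ∀ i, r i ≤ 1 := by
    intro i
    calc r i ≤ ∑ i', r i' := Finset.single_le_sum (fun i' _ => hr0 i') (Finset.mem_univ i)
    _ = 1 := hrsum
  -- the eigenvector action
  have hsigw : ∀ j, σ *ᵥ w j = (Q j : ℂ) • w j := by
    intro j
    rw [hwdef, hQdef]
    exact hσH.mulVec_eigenvectorBasis j
  -- support
  have hsupp' : ∀ j, Q j = 0 → ρ *ᵥ w j = 0 := by
    intro j h
    apply hsupp
    rw [hsigw j, h]
    simp
  have hsuppP : ∀ j, Q j = 0 → P j = 0 := by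
    intro j h
    rw [hPdef]
    simp only
    rw [hsupp' j h]
    simp
  -- P in terms of M and r
  have hPM : ∀ j, P j = ∑ i, M j i * r i := by
    intro j
    have hu : star V *ᵥ w j = fun i => W i j := by
      funext i
      rw [hWdef, hwU j]
      simp [Matrix.mulVec, Matrix.mul_apply, dotProduct]
    have key : star (w j) ⬝ᵥ (ρ *ᵥ w j) = ((∑ i, M j i * r i : ℝ) : ℂ) := by
      nth_rewrite 1 [hρH.spectral_theorem]
      rw [Unitary.conjStarAlgAut_apply]
      rw [← hVdef, ← Matrix.mulVec_mulVec, ← Matrix.mulVec_mulVec]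
      rw [Matrix.dotProduct_mulVec (star (w j)) V]
      have hvm : (star (w j)) ᵥ* V = star (star V *ᵥ w j) := by
        rw [Matrix.star_mulVec]
        congr 1
        exact (Matrix.conjTranspose_conjTranspose V).symm ▸ (star_star V).symm ▸ rfl
      rw [hvm, hu]
      simp only [dotProduct, Matrix.mulVec_diagonal, Pi.star_apply]
      push_cast
      refine Finset.sum_congr rfl fun i _ => ?_
      rw [hMdef]
      simp only [Function.comp_apply]
      rw [Complex.normSq_eq_conj_mul_self]
      simp only [hrdef, RCLike.star_def]
      norm_num
      try ring
      try rfl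
    rw [hPdef]
    simp only
    rw [key, Complex.ofReal_re]
  -- row and column sums of M
  have hWstar : star W = star U * V := by
    rw [hWdef, StarMul.star_mul, star_star]
  have hWu : star W * W = 1 := by
    rw [hWstar, hWdef, Matrix.mul_assoc, ← Matrix.mul_assoc V, hVstar', Matrix.one_mul, hUstar]
  have hWu' : W * star W = 1 := by
    rw [hWstar, hWdef, Matrix.mul_assoc, ← Matrix.mul_assoc U, hUstar', Matrix.one_mul, hVstar]
  have hrow : ∀ j, ∑ i, M j i = 1 := by
    intro j
    have h := congrArg (fun B : Matrix (Fin n) (Fin n) ℂ => B j j) hWu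
    simp only [Matrix.mul_apply, Matrix.star_apply, Matrix.one_apply_eq] at h
    have : ((∑ i, M j i : ℝ) : ℂ) = 1 := by
      push_cast
      rw [← h]
      refine Finset.sum_congr rfl fun i _ => ?_
      rw [hMdef]
      simp only
      rw [Complex.normSq_eq_conj_mul_self]
      rfl
    exact_mod_cast this
  have hcol : ∀ i, ∑ j, M j i = 1 := by
    intro i
    have h := congrArg (fun B : Matrix (Fin n) (Fin n) ℂ => B i i) hWu'
    simp only [Matrix.mul_apply, Matrix.star_apply, Matrix.one_apply_eq] at h
    have : ((∑ j, M j i : ℝ) : ℂ) = 1 := by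
      push_cast
      rw [← h]
      refine Finset.sum_congr rfl fun j _ => ?_
      rw [hMdef]
      simp only
      rw [← Complex.mul_conj]
      rfl
    exact_mod_cast this
  have hM0 : ∀ j i, 0 ≤ M j i := by
    intro j i; rw [hMdef]; exact Complex.normSq_nonneg _
  have hP0 : ∀ j, 0 ≤ P j := by
    intro j
    rw [hPM j]
    exact Finset.sum_nonneg fun i _ => mul_nonneg (hM0 j i) (hr0 i)
  have hPsum : ∑ j, P j = 1 := by
    calc ∑ j, P j = ∑ j, ∑ i, M j i * r i := Finset.sum_congr rfl fun j _ => hPM j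
    _ = ∑ i, (∑ j, M j i) * r i := by
        rw [Finset.sum_comm]
        exact Finset.sum_congr rfl fun i _ => (Finset.sum_mul _ _ _).symm
    _ = ∑ i, r i := Finset.sum_congr rfl fun i _ => by rw [hcol i, one_mul]
    _ = 1 := hrsum
  have hP1 : ∀ j, P j ≤ 1 := by
    intro j
    calc P j ≤ ∑ j', P j' := Finset.single_le_sum (fun j' _ => hP0 j') (Finset.mem_univ j)
    _ = 1 := hPsum
  -- trace identities
  have hC2 : (Matrix.trace (ρ * matLog ρ)).re = ∑ i, r i * Real.log (r i) := by
    rw [aux_trace_mul_matLog ρ ρ hρH]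
    have hdiagonal := hρH.conjStarAlgAut_star_eigenvectorUnitary
    rw [Unitary.conjStarAlgAut_star_apply] at hdiagonal
    rw [Complex.re_sum]
    refine Finset.sum_congr rfl fun i _ => ?_
    rw [← hVdef] at hdiagonal
    rw [hdiagonal]
    simp [Matrix.diagonal_apply_eq, Complex.mul_re, hrdef]
  have hC3 : (Matrix.trace (ρ * matLog σ)).re = ∑ j, P j * Real.log (Q j) := by
    rw [aux_trace_mul_matLog ρ σ hσH, Complex.re_sum]
    refine Finset.sum_congr rfl fun j _ => ?_
    rw [← hUdef, aux_entry_conj ρ U j, ← hwU j]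
    simp [Complex.mul_re, hPdef, hQdef]
  have hRel : relEnt ρ σ = (∑ i, r i * Real.log (r i)) - ∑ j, P j * Real.log (Q j) := by
    rw [relEnt, Matrix.mul_sub, Matrix.trace_sub, Complex.sub_re, hC2, hC3]
  -- Jensen (entropy increase)
  have hJen : ∑ j, P j * Real.log (P j) ≤ ∑ i, r i * Real.log (r i) := by
    have step : ∀ j, P j * Real.log (P j) ≤ ∑ i, M j i * (r i * Real.log (r i)) := by
      intro j
      have key := Real.convexOn_mul_log.map_sum_le (t := Finset.univ)
        (w := fun i => M j i) (p := fun i => r i)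
        (fun i _ => hM0 j i) (hrow j) (fun i _ => Set.mem_Ici.2 (hr0 i))
      simp only [smul_eq_mul] at key
      rw [← hPM j] at key
      exact key
    calc ∑ j, P j * Real.log (P j) ≤ ∑ j, ∑ i, M j i * (r i * Real.log (r i)) :=
        Finset.sum_le_sum fun j _ => step j
      _ = ∑ i, (∑ j, M j i) * (r i * Real.log (r i)) := by
          rw [Finset.sum_comm]
          exact Finset.sum_congr rfl fun i _ => (Finset.sum_mul _ _ _).symm
      _ = ∑ i, r i * Real.log (r i) :=
          Finset.sum_congr rfl fun i _ => by rw [hcol i, one_mul]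
  have hUpper : relEnt ρ σ ≤ ∑ j, -(P j * Real.log (Q j)) := by
    rw [hRel]
    have h1 : ∑ i, r i * Real.log (r i) ≤ 0 :=
      Finset.sum_nonpos fun i _ => Real.mul_log_nonpos (hr0 i) (hr1 i)
    have h2 : ∑ j, -(P j * Real.log (Q j)) = -(∑ j, P j * Real.log (Q j)) := by
      rw [← Finset.sum_neg_distrib]
    linarith
  have hLower : ∑ j, (P j * Real.log (P j) - P j * Real.log (Q j)) ≤ relEnt ρ σ := by
    rw [hRel, Finset.sum_sub_distrib]
    linarith [hJen]
  -- choose the maximizing index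
  obtain ⟨js, _, hmax⟩ := Finset.exists_max_image Finset.univ
    (fun j => -(P j * Real.log (Q j))) Finset.univ_nonempty
  have hq1p : Q js = 1 → P js = 1 := by
    intro h
    have hQs := Finset.add_sum_erase Finset.univ Q (Finset.mem_univ js)
    rw [hQsum, h] at hQs
    have hQz : ∀ j ∈ Finset.univ.erase js, Q j = 0 := by
      intro j hj
      have h1 := Finset.single_le_sum (f := Q) (fun k _ => hQ0 k) hj
      have h2 : ∑ k ∈ Finset.univ.erase js, Q k = 0 := by linarith
      exact le_antisymm (by linarith [h1, h2]) (hQ0 j)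
    have hPz : ∀ j ∈ Finset.univ.erase js, P j = 0 := fun j hj => hsuppP j (hQz j hj)
    have hPs := Finset.add_sum_erase Finset.univ P (Finset.mem_univ js)
    rw [hPsum, Finset.sum_eq_zero hPz] at hPs
    linarith
  -- the POVM element
  set K : Matrix (Fin n) (Fin n) ℂ := ketbra (w js) with hKdef
  have hwnorm : star (w js) ⬝ᵥ w js = 1 := by
    have h := congrArg (fun B : Matrix (Fin n) (Fin n) ℂ => B js js) hUstar
    simp only [Matrix.mul_apply, Matrix.star_apply, Matrix.one_apply_eq] at h
    rw [← h, hwU js]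
    rfl
  have hKmulVec : ∀ x : Fin n → ℂ, K *ᵥ x = (star (w js) ⬝ᵥ x) • w js := by
    intro x
    funext a
    simp only [hKdef, ketbra, Matrix.mulVec, dotProduct, Matrix.of_apply, Pi.smul_apply,
      Pi.star_apply, smul_eq_mul, Finset.sum_mul, Complex.star_def]
    exact Finset.sum_congr rfl fun b _ => by ring
  have hdotconj : ∀ x : Fin n → ℂ, star x ⬝ᵥ w js = starRingEnd ℂ (star (w js) ⬝ᵥ x) := by
    intro x
    simp only [dotProduct, Pi.star_apply, map_sum, Complex.star_def, _root_.map_mul,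
      Complex.conj_conj]
    exact Finset.sum_congr rfl fun b _ => by ring
  have hKH : K.IsHermitian := by
    rw [Matrix.IsHermitian]
    ext a b
    simp [hKdef, ketbra, Matrix.conjTranspose_apply, mul_comm]
  have hKK : K * K = K := by
    ext a b
    simp only [hKdef, ketbra, Matrix.mul_apply, Matrix.of_apply]
    have key : ∑ k, w js a * (starRingEnd ℂ) (w js k) * (w js k * (starRingEnd ℂ) (w js b))
        = (w js a * (starRingEnd ℂ) (w js b)) * (star (w js) ⬝ᵥ w js) := by
      simp only [dotProduct, Pi.star_apply, Complex.star_def, Finset.mul_sum]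
      exact Finset.sum_congr rfl fun k _ => by ring
    rw [key, hwnorm, mul_one]
  -- positive semidefiniteness facts
  have hquadK : ∀ x : Fin n → ℂ, star x ⬝ᵥ (K *ᵥ x)
      = ((Complex.normSq (star (w js) ⬝ᵥ x) : ℝ) : ℂ) := by
    intro x
    rw [hKmulVec x, dotProduct_smul, hdotconj x, smul_eq_mul, ← Complex.mul_conj]
  have hKpsd : K.PosSemidef := by
    refine Matrix.PosSemidef.of_dotProduct_mulVec_nonneg hKH fun x => ?_
    rw [hquadK x]
    exact Complex.zero_le_real.2 (Complex.normSq_nonneg _)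
  set t : ℝ := Real.log 2 with htdef
  have ht0 : (0:ℝ) < t := aux_gt2
  have ht1 : t < 1 := aux_lt2
  set F : Matrix (Fin n) (Fin n) ℂ := (t : ℂ) • K with hFdef
  have hsmulpsd : ∀ c : ℝ, 0 ≤ c → ((c : ℂ) • K).PosSemidef := by
    intro c hc
    refine Matrix.PosSemidef.of_dotProduct_mulVec_nonneg ?_ ?_
    · rw [Matrix.IsHermitian, Matrix.conjTranspose_smul, hKH.eq]
      congr 1
      simp
    · intro x
      rw [Matrix.smul_mulVec, dotProduct_smul, smul_eq_mul, hquadK x,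
        ← Complex.ofReal_mul]
      exact Complex.zero_le_real.2 (mul_nonneg hc (Complex.normSq_nonneg _))
  have hFpsd : F.PosSemidef := hsmulpsd t ht0.le
  have h1Kpsd : ((1 : Matrix (Fin n) (Fin n) ℂ) - K).PosSemidef := by
    have hsq : (1 - K)ᴴ * (1 - K) = 1 - K := by
      have hstar : (1 - K)ᴴ = 1 - K := by
        rw [Matrix.conjTranspose_sub, Matrix.conjTranspose_one, hKH.eq]
      rw [hstar]
      simp only [Matrix.sub_mul, Matrix.mul_sub, Matrix.mul_one, Matrix.one_mul, hKK]
      abel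
    rw [← hsq]
    exact Matrix.posSemidef_conjTranspose_mul_self _
  have hF1psd : ((1 : Matrix (Fin n) (Fin n) ℂ) - F).PosSemidef := by
    have hdecomp : (1 : Matrix (Fin n) (Fin n) ℂ) - F
        = ((1 : Matrix (Fin n) (Fin n) ℂ) - K) + ((1 - t : ℝ) : ℂ) • K := by
      rw [hFdef]
      have : (((1 - t : ℝ)) : ℂ) • K = K - (t : ℂ) • K := by
        push_cast
        rw [sub_smul, one_smul]
      rw [this]
      abel
    rw [hdecomp]
    exact h1Kpsd.add (hsmulpsd (1 - t) (by linarith))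
  -- trace formulas
  have htrK : ∀ B : Matrix (Fin n) (Fin n) ℂ, (K * B).trace = star (w js) ⬝ᵥ (B *ᵥ w js) := by
    intro B
    simp only [Matrix.trace, Matrix.diag, Matrix.mul_apply, hKdef, ketbra, Matrix.of_apply,
      Matrix.mulVec, dotProduct, Pi.star_apply, Complex.star_def, Finset.mul_sum]
    rw [Finset.sum_comm]
    exact Finset.sum_congr rfl fun b _ => Finset.sum_congr rfl fun a _ => by ring
  have htrRρ : trR F ρ = t * P js := by
    rw [trR, hFdef, Matrix.smul_mul, Matrix.trace_smul, smul_eq_mul, htrK ρ]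
    rw [hPdef]
    simp [Complex.mul_re]
  have htrRσ : trR F σ = t * Q js := by
    rw [trR, hFdef, Matrix.smul_mul, Matrix.trace_smul, smul_eq_mul, htrK σ]
    rw [hsigw js, dotProduct_smul, smul_eq_mul, hwnorm, mul_one, ← Complex.ofReal_mul,
      Complex.ofReal_re]
  -- classical inequalities at the chosen index
  have hscale := aux_scale_ineq (P js) (Q js) (hP0 js) (hP1 js) (hQ0 js) (hQ1 js)
    (hsuppP js) hq1p
  rw [← htdef] at hscale
  have hlowerS := aux_lower_ineq (P js) (Q js) (hP0 js) (hP1 js) (hQ0 js) (hQ1 js) (hsuppP js)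
  rw [← htdef] at hlowerS
  have hcoarse := aux_logSumFinset (Finset.univ.erase js) P Q
    (fun j _ => hP0 j) (fun j _ => hQ0 j) (fun j _ h => hsuppP j h)
  have hsP : ∑ j ∈ Finset.univ.erase js, P j = 1 - P js := by
    have h := Finset.add_sum_erase Finset.univ P (Finset.mem_univ js)
    rw [hPsum] at h
    linarith
  have hsQ : ∑ j ∈ Finset.univ.erase js, Q j = 1 - Q js := by
    have h := Finset.add_sum_erase Finset.univ Q (Finset.mem_univ js)
    rw [hQsum] at h
    linarith
  rw [hsP, hsQ] at hcoarse
  have hsplit : P js * Real.log (P js / Q js)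
      + ∑ j ∈ Finset.univ.erase js, P j * Real.log (P j / Q j)
      = ∑ j, P j * Real.log (P j / Q j) :=
    Finset.add_sum_erase Finset.univ (fun j => P j * Real.log (P j / Q j))
      (Finset.mem_univ js)
  have hdivlog : ∀ j, P j * Real.log (P j / Q j) = P j * Real.log (P j) - P j * Real.log (Q j) := by
    intro j
    rcases eq_or_lt_of_le (hP0 j) with h | h
    · rw [← h]; simp
    · have hQj : 0 < Q j := by
        rcases eq_or_lt_of_le (hQ0 j) with h2 | h2
        · exfalso; have := hsuppP j h2.symm; linarith
        · exact h2
      rw [Real.log_div (ne_of_gt h) (ne_of_gt hQj)]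
      ring
  have hsum_le : ∑ j, P j * Real.log (P j / Q j) ≤ relEnt ρ σ := by
    calc ∑ j, P j * Real.log (P j / Q j)
        = ∑ j, (P j * Real.log (P j) - P j * Real.log (Q j)) :=
          Finset.sum_congr rfl fun j _ => hdivlog j
      _ ≤ relEnt ρ σ := hLower
  have hA0 : 0 ≤ -(P js * Real.log (Q js)) := by
    have h := Real.log_nonpos (hQ0 js) (hQ1 js)
    nlinarith [hP0 js]
  refine ⟨F, ⟨hFpsd, hF1psd⟩, ?_, ?_⟩
  · -- first inequality
    rw [ge_iff_le, htrRρ, htrRσ]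
    linarith [hscale, hcoarse, hsplit, hsum_le]
  · -- second inequality
    rw [ge_iff_le, htrRρ, htrRσ]
    have hclaim : (relEnt ρ σ - Real.logb 2 n) / ((n:ℝ) - 1)
        ≤ -(P js * Real.log (Q js)) := by
      rcases Nat.lt_or_ge n 2 with h | h
    -- n = 1
      · have hn1 : ((n:ℝ) - 1) = 0 := by
          rw [show n = 1 from by omega]
          norm_num
        rw [hn1, div_zero]
        exact hA0
      · have hnR : (0:ℝ) < (n:ℝ) - 1 := by
          have h2 : (2:ℝ) ≤ (n:ℝ) := by exact_mod_cast h
          linarith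
        obtain ⟨j0, _, hj0⟩ := Finset.exists_le_of_sum_le (s := (Finset.univ : Finset (Fin n)))
          (f := fun _ : Fin n => (1:ℝ)/n) (g := Q) Finset.univ_nonempty
          (by rw [Finset.sum_const, Finset.card_univ, Fintype.card_fin, nsmul_eq_mul, hQsum]
              field_simp; exact le_refl 1)
        have hinvn : (0:ℝ) < (1:ℝ)/n := by positivity
        have hQj0 : 0 < Q j0 := lt_of_lt_of_le hinvn hj0
        have hlogn0 : (0:ℝ) ≤ Real.log n := Real.log_nonneg (by exact_mod_cast hn)
        have ha0 : -(P j0 * Real.log (Q j0)) ≤ Real.log n := by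
          have hinv : -Real.log (Q j0) ≤ Real.log n := by
            rw [← Real.log_inv]
            apply Real.log_le_log (by positivity)
            have h3 : (Q j0)⁻¹ ≤ ((1:ℝ)/n)⁻¹ := by
              apply inv_anti₀ hinvn hj0
            rw [one_div, inv_inv] at h3
            exact h3
          have hnn : 0 ≤ -Real.log (Q j0) := by
            linarith [Real.log_nonpos (hQ0 j0) (hQ1 j0)]
          calc -(P j0 * Real.log (Q j0)) = P j0 * (-Real.log (Q j0)) := by ring
            _ ≤ 1 * (-Real.log (Q j0)) := mul_le_mul_of_nonneg_right (hP1 j0) hnn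
            _ = -Real.log (Q j0) := one_mul _
            _ ≤ Real.log n := hinv
        have hsum2 : ∑ j ∈ Finset.univ.erase j0, -(P j * Real.log (Q j))
            ≤ -(P js * Real.log (Q js)) * ((n:ℝ)-1) := by
          have hcard : (Finset.univ.erase j0).card = n - 1 := by
            rw [Finset.card_erase_of_mem (Finset.mem_univ j0), Finset.card_univ,
              Fintype.card_fin]
          have hb := Finset.sum_le_card_nsmul (Finset.univ.erase j0)
            (fun j => -(P j * Real.log (Q j))) (-(P js * Real.log (Q js)))
            (fun j _ => hmax j (Finset.mem_univ j))
          rw [hcard, nsmul_eq_mul] at hb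
          have hcast : ((n - 1 : ℕ) : ℝ) = (n:ℝ) - 1 := by
            rw [Nat.cast_sub hn]
            norm_num
          rw [hcast] at hb
          linarith [hb]
        have hsplit0 : -(P j0 * Real.log (Q j0))
            + ∑ j ∈ Finset.univ.erase j0, -(P j * Real.log (Q j))
            = ∑ j, -(P j * Real.log (Q j)) :=
          Finset.add_sum_erase Finset.univ (fun j => -(P j * Real.log (Q j)))
            (Finset.mem_univ j0)
        have hlogb : Real.log n ≤ Real.logb 2 n := by
          rw [Real.logb, le_div_iff₀ aux_gt2]
          nlinarith [hlogn0, aux_lt2]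
        rw [div_le_iff₀ hnR]
        linarith [hUpper, ha0, hsum2, hsplit0, hlogb]
    linarith [hlowerS, hclaim]

end
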